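/- For every finite set A ⊆ ℤ^n, #A ≤ 1 + Σ_I #(integer boxes contained in P_I A), where the sum is over all nonempty subsets I ⊆ {1,...,n} and P_I denotes coordinate projection onto ℤ^I. -/

import Mathlib

open Finset

noncomputable def boxCount {n : ℕ} (A : Finset (Fin n → ℤ)) (I : Finset (Fin n)) : ℕ :=
  Set.ncard {ab : ({i // i ∈ I} → ℤ) × ({i // i ∈ I} → ℤ) |
    (∀ i, ab.1 i < ab.2 i) ∧
    ∀ c : {i // i ∈ I} → ℤ, (∀ i, c i = ab.1 i ∨ c i = ab.2 i) →
      ∃ x ∈ A, ∀ i : {i // i ∈ I}, x i.1 = c i}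

namespace BoxProof

variable {n : ℕ}

def boxSet (A : Finset (Fin n → ℤ)) (I : Finset (Fin n)) :
    Set (({i // i ∈ I} → ℤ) × ({i // i ∈ I} → ℤ)) :=
  {ab | (∀ i, ab.1 i < ab.2 i) ∧
    ∀ c : {i // i ∈ I} → ℤ, (∀ i, c i = ab.1 i ∨ c i = ab.2 i) →
      ∃ x ∈ A, ∀ i : {i // i ∈ I}, x i.1 = c i}

lemma boxCount_def (A : Finset (Fin n → ℤ)) (I : Finset (Fin n)) :
    boxCount A I = (boxSet A I).ncard := rfl

lemma boxSet_finite (A : Finset (Fin n → ℤ)) (I : Finset (Fin n)) :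
    (boxSet A I).Finite := by
  apply Set.Finite.subset
    (Set.Finite.prod (A.finite_toSet.image (fun x (i : {i // i ∈ I}) => x i.1))
      (A.finite_toSet.image (fun x (i : {i // i ∈ I}) => x i.1)))
  rintro ⟨a, b⟩ ⟨_, h2⟩
  obtain ⟨x, hx, hxa⟩ := h2 a (fun i => Or.inl rfl)
  obtain ⟨y, hy, hyb⟩ := h2 b (fun i => Or.inr rfl)
  exact ⟨⟨x, hx, funext fun i => hxa i⟩, ⟨y, hy, funext fun i => hyb i⟩⟩

noncomputable def boxFinset (A : Finset (Fin n → ℤ)) (I : Finset (Fin n)) :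
    Finset (({i // i ∈ I} → ℤ) × ({i // i ∈ I} → ℤ)) :=
  (boxSet_finite A I).toFinset

lemma mem_boxFinset {A : Finset (Fin n → ℤ)} {I : Finset (Fin n)} {ab} :
    ab ∈ boxFinset A I ↔ ab ∈ boxSet A I := Set.Finite.mem_toFinset _

lemma boxCount_eq_card (A : Finset (Fin n → ℤ)) (I : Finset (Fin n)) :
    boxCount A I = (boxFinset A I).card := by
  rw [boxCount_def, Set.ncard_eq_toFinset_card _ (boxSet_finite A I)]; rfl

lemma boxFinset_mono {A B : Finset (Fin n → ℤ)} (h : A ⊆ B) (I : Finset (Fin n)) :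
    boxFinset A I ⊆ boxFinset B I := by
  intro ab hab
  rw [mem_boxFinset] at *
  obtain ⟨h1, h2⟩ := hab
  refine ⟨h1, fun c hc => ?_⟩
  obtain ⟨x, hx, hxc⟩ := h2 c hc
  exact ⟨x, h hx, hxc⟩

variable {n : ℕ}

lemma boxCount_fiber_eq_zero {A : Finset (Fin n → ℤ)} {I : Finset (Fin n)} {j : Fin n}
    (hj : j ∈ I) (v : ℤ) :
    boxCount (A.filter (fun x => x j = v)) I = 0 := by
  classical
  rw [boxCount_def, Set.ncard_eq_zero (boxSet_finite _ _)]
  ext ab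
  simp only [Set.mem_empty_iff_false, iff_false]
  rintro ⟨h1, h2⟩
  obtain ⟨x, hx, hxa⟩ := h2 ab.1 (fun i => Or.inl rfl)
  obtain ⟨y, hy, hyb⟩ := h2 ab.2 (fun i => Or.inr rfl)
  rw [mem_filter] at hx hy
  have ha : ab.1 ⟨j, hj⟩ = v := by rw [← hxa ⟨j, hj⟩]; exact hx.2
  have hb : ab.2 ⟨j, hj⟩ = v := by rw [← hyb ⟨j, hj⟩]; exact hy.2
  have := h1 ⟨j, hj⟩
  omega

lemma card_image_le_one_add_boxCount (A : Finset (Fin n → ℤ)) (j : Fin n)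
    (hA : A.Nonempty) :
    (A.image (fun x => x j)).card ≤ 1 + boxCount A {j} := by
  classical
  set V := A.image (fun x => x j) with hV
  have hVne : V.Nonempty := hA.image _
  set m := V.min' hVne with hm
  have hmem : m ∈ V := V.min'_mem hVne
  rw [boxCount_eq_card]
  have key : (V.erase m).card ≤ (boxFinset A {j}).card := by
    apply Finset.card_le_card_of_injOn
      (fun v => ((fun _ => m), (fun _ => v)))
    · intro v hv
      have hvV : v ∈ V := mem_of_mem_erase hv
      have hlt : m < v := lt_of_le_of_ne (V.min'_le v hvV) (Ne.symm (ne_of_mem_erase hv))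
      rw [Finset.mem_coe, mem_boxFinset]
      constructor
      · intro i; exact hlt
      · intro c hc
        have hjj : j ∈ ({j} : Finset (Fin n)) := mem_singleton_self j
        rcases hc ⟨j, hjj⟩ with h | h
        · obtain ⟨x, hx, hxj⟩ := mem_image.mp hmem
          refine ⟨x, hx, fun i => ?_⟩
          have : i = ⟨j, hjj⟩ := Subtype.ext (mem_singleton.mp i.2)
          rw [this, h, hxj]
        · obtain ⟨x, hx, hxj⟩ := mem_image.mp hvV
          refine ⟨x, hx, fun i => ?_⟩
          have : i = ⟨j, hjj⟩ := Subtype.ext (mem_singleton.mp i.2)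
          rw [this, h, hxj]
    · intro v₁ _ v₂ _ h
      have := congrArg (fun p => p.2 ⟨j, mem_singleton_self j⟩) h
      simpa using this
  rw [← Finset.card_erase_add_one hmem]
  omega

variable {n : ℕ}

def lift (I : Finset (Fin n)) (j : Fin n) (a : {i // i ∈ I} → ℤ) (t : ℤ) :
    {i // i ∈ insert j I} → ℤ :=
  fun i => if h : i.1 ∈ I then a ⟨i.1, h⟩ else t

lemma lift_res (I : Finset (Fin n)) (j : Fin n) (a : {i // i ∈ I} → ℤ) (t : ℤ) :
    (fun i : {i // i ∈ I} => lift I j a t ⟨i.1, mem_insert_of_mem i.2⟩) = a := by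
  funext i
  simp [lift, i.2]

lemma lift_j {I : Finset (Fin n)} {j : Fin n} (hj : j ∉ I) (a : {i // i ∈ I} → ℤ) (t : ℤ) :
    lift I j a t ⟨j, mem_insert_self j I⟩ = t := dif_neg hj

lemma lift_mem {A : Finset (Fin n → ℤ)} {I : Finset (Fin n)} {j : Fin n} (hj : j ∉ I)
    {ab : ({i // i ∈ I} → ℤ) × ({i // i ∈ I} → ℤ)} {s t : ℤ} (hst : s < t)
    (hs : ab ∈ boxFinset (A.filter (fun x => x j = s)) I)
    (ht : ab ∈ boxFinset (A.filter (fun x => x j = t)) I) :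
    (lift I j ab.1 s, lift I j ab.2 t) ∈ boxFinset A (insert j I) := by
  classical
  rw [mem_boxFinset] at hs ht ⊢
  constructor
  · intro i
    by_cases h : i.1 ∈ I
    · simpa [lift, h] using hs.1 ⟨i.1, h⟩
    · simpa [lift, h] using hst
  · intro c' hc'
    set c : {i // i ∈ I} → ℤ := fun i => c' ⟨i.1, mem_insert_of_mem i.2⟩ with hc
    have hcorner : ∀ i, c i = ab.1 i ∨ c i = ab.2 i := by
      intro i
      rcases hc' ⟨i.1, mem_insert_of_mem i.2⟩ with h | h
      · left; rw [hc]; simp only []; rw [h]; simp [lift, i.2]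
      · right; rw [hc]; simp only []; rw [h]; simp [lift, i.2]
    have hj' : c' ⟨j, mem_insert_self j I⟩ = s ∨ c' ⟨j, mem_insert_self j I⟩ = t := by
      rcases hc' ⟨j, mem_insert_self j I⟩ with h | h
      · left; rw [h]; exact lift_j hj ab.1 s
      · right; rw [h]; exact lift_j hj ab.2 t
    have key : ∀ u : ℤ, c' ⟨j, mem_insert_self j I⟩ = u →
        (∃ x ∈ A.filter (fun x => x j = u), ∀ i : {i // i ∈ I}, x i.1 = c i) →
        ∃ x ∈ A, ∀ i : {i // i ∈ insert j I}, x i.1 = c' i := by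
      intro u hu ⟨x, hx, hxc⟩
      rw [mem_filter] at hx
      refine ⟨x, hx.1, fun i => ?_⟩
      rcases mem_insert.mp i.2 with h | h
      · have hi : i = ⟨j, mem_insert_self j I⟩ := Subtype.ext h
        rw [hi, hu]
        exact hx.2
      · exact hxc ⟨i.1, h⟩
    rcases hj' with h | h
    · exact key s h (hs.2 c hcorner)
    · exact key t h (ht.2 c hcorner)


lemma sum_fiber_le (A : Finset (Fin n → ℤ)) (I : Finset (Fin n)) (j : Fin n) (hj : j ∉ I) :
    ∑ v ∈ A.image (fun x => x j), boxCount (A.filter (fun x => x j = v)) I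
      ≤ boxCount A I + boxCount A (insert j I) := by
  classical
  set V := A.image (fun x => x j) with hV
  set F : ℤ → Finset (({i // i ∈ I} → ℤ) × ({i // i ∈ I} → ℤ)) :=
    fun v => boxFinset (A.filter (fun x => x j = v)) I with hF
  simp_rw [boxCount_eq_card]
  rw [← Finset.card_disjSum, ← Finset.card_sigma]
  set m : (({i // i ∈ I} → ℤ) × ({i // i ∈ I} → ℤ)) → ℤ :=
    fun ab => (WithTop.untopD 0 (V.filter (fun v => ab ∈ F v)).min) with hm
  have hmin : ∀ v ab, v ∈ V → ab ∈ F v →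
      m ab ∈ V.filter (fun v => ab ∈ F v) ∧ m ab ≤ v := by
    intro v ab hv hab
    have hS : (V.filter (fun v => ab ∈ F v)).Nonempty := ⟨v, mem_filter.mpr ⟨hv, hab⟩⟩
    have : m ab = (V.filter (fun v => ab ∈ F v)).min' hS := by
      rw [hm]
      simp only []
      rw [← Finset.coe_min' hS]
      rfl
    rw [this]
    exact ⟨Finset.min'_mem _ hS, Finset.min'_le _ v (mem_filter.mpr ⟨hv, hab⟩)⟩
  apply Finset.card_le_card_of_injOn
    (fun x : Σ _ : ℤ, (({i // i ∈ I} → ℤ) × ({i // i ∈ I} → ℤ)) =>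
      if x.1 = m x.2 then Sum.inl x.2
      else Sum.inr (lift I j x.2.1 (m x.2), lift I j x.2.2 x.1))
  · rintro ⟨v, ab⟩ hx
    rw [Finset.mem_coe, Finset.mem_sigma] at hx
    obtain ⟨hv, hab⟩ := hx
    obtain ⟨hmmem, hmle⟩ := hmin v ab hv hab
    rw [mem_filter] at hmmem
    by_cases h : v = m ab
    · simp only [h, if_pos rfl]
      exact Finset.inl_mem_disjSum.mpr (boxFinset_mono (Finset.filter_subset _ _) I hab)
    · simp only [if_neg h]
      refine Finset.inr_mem_disjSum.mpr ?_
      exact lift_mem hj (lt_of_le_of_ne hmle (fun e => h e.symm)) hmmem.2 hab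
  · rintro ⟨v₁, ab₁⟩ hx₁ ⟨v₂, ab₂⟩ hx₂ heq
    simp only [Finset.mem_coe, Finset.mem_sigma] at hx₁ hx₂
    simp only [] at heq
    by_cases h₁ : v₁ = m ab₁ <;> by_cases h₂ : v₂ = m ab₂ <;>
      simp only [if_pos, if_neg, h₁, h₂, if_true, reduceIte] at heq
    · obtain hab := Sum.inl.inj heq
      subst hab
      exact Sigma.ext (h₁.trans h₂.symm) (heq_of_eq rfl)
    · exact absurd heq (by simp)
    · exact absurd heq (by simp)
    · obtain hpair := Sum.inr.inj heq
      have e1 : lift I j ab₁.1 (m ab₁) = lift I j ab₂.1 (m ab₂) := congrArg Prod.fst hpair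
      have e2 : lift I j ab₁.2 v₁ = lift I j ab₂.2 v₂ := congrArg Prod.snd hpair
      have ha : ab₁.1 = ab₂.1 := by
        rw [← lift_res I j ab₁.1 (m ab₁), ← lift_res I j ab₂.1 (m ab₂), e1]
      have hb : ab₁.2 = ab₂.2 := by
        rw [← lift_res I j ab₁.2 v₁, ← lift_res I j ab₂.2 v₂, e2]
      have hab : ab₁ = ab₂ := Prod.ext ha hb
      have hv : v₁ = v₂ := by
        have := congrArg (fun f => f ⟨j, mem_insert_self j I⟩) e2
        simpa [lift_j hj] using this
      exact Sigma.ext hv (heq_of_eq hab)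

end BoxProof

theorem card_le_one_add_sum_boxCount (n : ℕ) (A : Finset (Fin n → ℤ)) :
    A.card ≤ 1 + ∑ I ∈ (Finset.univ : Finset (Finset (Fin n))).filter
      (fun I => I.Nonempty), boxCount A I := by
  classical
  induction A using Finset.strongInduction with
  | _ A ih =>
  by_cases h1 : ∀ x ∈ A, ∀ y ∈ A, x = y
  · exact le_trans (Finset.card_le_one.mpr (fun a ha b hb => h1 a ha b hb))
      (Nat.le_add_right 1 _)
  · push_neg at h1
    obtain ⟨x, hx, y, hy, hxy⟩ := h1
    obtain ⟨j, hj⟩ := Function.ne_iff.mp hxy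
    set S := (Finset.univ : Finset (Finset (Fin n))).filter (fun I => I.Nonempty) with hSdef
    set V := A.image (fun z => z j) with hVdef
    have hAne : A.Nonempty := ⟨x, hx⟩
    have hcard : A.card = ∑ v ∈ V, (A.filter (fun z => z j = v)).card :=
      Finset.card_eq_sum_card_fiberwise (fun z hz => Finset.mem_image_of_mem _ hz)
    have hfib : ∀ v ∈ V, (A.filter (fun z => z j = v)) ⊂ A := by
      intro v hv
      refine (Finset.ssubset_iff_of_subset (Finset.filter_subset _ _)).mpr ?_
      by_cases hxv : x j = v
      · refine ⟨y, hy, fun hmem => ?_⟩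
        exact hj (by rw [hxv, ← (Finset.mem_filter.mp hmem).2])
      · exact ⟨x, hx, fun hmem => hxv (Finset.mem_filter.mp hmem).2⟩
    have step1 : A.card ≤ V.card +
        ∑ I ∈ S, ∑ v ∈ V, boxCount (A.filter (fun z => z j = v)) I := by
      rw [hcard, Finset.sum_comm (s := S)]
      calc ∑ v ∈ V, (A.filter (fun z => z j = v)).card
          ≤ ∑ v ∈ V, (1 + ∑ I ∈ S, boxCount (A.filter (fun z => z j = v)) I) :=
            Finset.sum_le_sum (fun v hv => ih _ (hfib v hv))
        _ = V.card + ∑ v ∈ V, ∑ I ∈ S, boxCount (A.filter (fun z => z j = v)) I := by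
            rw [Finset.sum_add_distrib, Finset.sum_const, smul_eq_mul, mul_one]
    set S₀ := S.filter (fun I => j ∉ I) with hS0def
    have step2 : ∑ I ∈ S, ∑ v ∈ V, boxCount (A.filter (fun z => z j = v)) I
        = ∑ I ∈ S₀, ∑ v ∈ V, boxCount (A.filter (fun z => z j = v)) I := by
      symm
      apply Finset.sum_subset (Finset.filter_subset _ _)
      intro I hI hInot
      have hjI : j ∈ I := by
        by_contra hc
        exact hInot (Finset.mem_filter.mpr ⟨hI, hc⟩)
      exact Finset.sum_eq_zero (fun v _ => BoxProof.boxCount_fiber_eq_zero hjI v)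
    have step3 : ∑ I ∈ S₀, ∑ v ∈ V, boxCount (A.filter (fun z => z j = v)) I
        ≤ ∑ I ∈ S₀, (boxCount A I + boxCount A (insert j I)) :=
      Finset.sum_le_sum (fun I hI =>
        BoxProof.sum_fiber_le A I j (Finset.mem_filter.mp hI).2)
    have step4 : V.card ≤ 1 + boxCount A {j} :=
      BoxProof.card_image_le_one_add_boxCount A j hAne
    -- index decomposition
    have hjS0 : ∀ I ∈ S₀, j ∉ I := fun I hI => (Finset.mem_filter.mp hI).2
    have hsub : insert {j} (S₀ ∪ S₀.image (insert j)) ⊆ S := by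
      intro I hI
      rcases Finset.mem_insert.mp hI with h | h
      · subst h
        exact Finset.mem_filter.mpr ⟨Finset.mem_univ _, Finset.singleton_nonempty j⟩
      · rcases Finset.mem_union.mp h with h | h
        · exact Finset.mem_of_mem_filter _ h
        · obtain ⟨I', hI', rfl⟩ := Finset.mem_image.mp h
          exact Finset.mem_filter.mpr ⟨Finset.mem_univ _, Finset.insert_nonempty _ _⟩
    have hnot1 : ({j} : Finset (Fin n)) ∉ S₀ ∪ S₀.image (insert j) := by
      intro h
      rcases Finset.mem_union.mp h with h | h
      · exact hjS0 _ h (Finset.mem_singleton_self j)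
      · obtain ⟨I', hI', hins⟩ := Finset.mem_image.mp h
        have hne : I'.Nonempty := (Finset.mem_filter.mp (Finset.mem_of_mem_filter _ hI')).2
        obtain ⟨a, ha⟩ := hne
        have : a ∈ insert j I' := Finset.mem_insert_of_mem ha
        rw [hins, Finset.mem_singleton] at this
        exact hjS0 _ hI' (this ▸ ha)
    have hdisj : Disjoint S₀ (S₀.image (insert j)) := by
      rw [Finset.disjoint_left]
      intro I hI hI'
      obtain ⟨I', _, rfl⟩ := Finset.mem_image.mp hI'
      exact hjS0 _ hI (Finset.mem_insert_self j I')
    have hinj : ∀ x₁ ∈ S₀, ∀ x₂ ∈ S₀, insert j x₁ = insert j x₂ → x₁ = x₂ := by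
      intro x₁ h₁ x₂ h₂ h
      rw [← Finset.erase_insert (hjS0 _ h₁), ← Finset.erase_insert (hjS0 _ h₂), h]
    have hsplit : boxCount A {j} + (∑ I ∈ S₀, boxCount A I
          + ∑ I ∈ S₀, boxCount A (insert j I)) ≤ ∑ I ∈ S, boxCount A I := by
      have := Finset.sum_le_sum_of_subset (f := fun I => boxCount A I) hsub
      rwa [Finset.sum_insert hnot1, Finset.sum_union hdisj,
        Finset.sum_image hinj, ← add_assoc, add_assoc] at this
    rw [← Finset.sum_add_distrib] at hsplit
    calc A.card ≤ V.card + ∑ I ∈ S, ∑ v ∈ V, boxCount (A.filter (fun z => z j = v)) I :=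
          step1
      _ = V.card + ∑ I ∈ S₀, ∑ v ∈ V, boxCount (A.filter (fun z => z j = v)) I := by
          rw [step2]
      _ ≤ (1 + boxCount A {j}) + ∑ I ∈ S₀, (boxCount A I + boxCount A (insert j I)) :=
          Nat.add_le_add step4 step3
      _ = 1 + (boxCount A {j} + ∑ I ∈ S₀, (boxCount A I + boxCount A (insert j I))) := by
          rw [add_assoc]
      _ ≤ 1 + ∑ I ∈ S, boxCount A I := Nat.add_le_add_left hsplit 1
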